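/- The inner offset of a Lipschitz graph is Lipschitz with the same constant: let φ : ℝ^{d-1} → [0,∞) be Lipschitz with constant L, Φ(x̄) = (φ(x̄), x̄), and define ψ(x̄) = min{ t ∈ ℝ : dist((t, x̄), Φ(ℝ^{d-1})) = δ and t < φ(x̄) }. Then ψ is well-defined on ℝ^{d-1} and Lipschitz with constant L (independent of δ). -/

import Mathlib

open MeasureTheory Real Set Filter

noncomputable section

/-- Surface area of the unit `(d-1)`-sphere in `ℝ^d`. -/
def sphereArea (d : ℕ) : ℝ :=
  d * (volume (Metric.ball (0 : EuclideanSpace ℝ (Fin d)) 1)).toReal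

/-- The rescaled nonlocal kernel `γ_δ^β(r) = C_{d,p,β} δ^{-(d+p-β)} r^{-β} 1_{r<δ}`
with `C_{d,p,β} = (d+p-β)/s_{d-1}`. -/
def nlKernel (d : ℕ) (p β δ r : ℝ) : ℝ :=
  if r < δ then (((d : ℝ) + p - β) / (sphereArea d * δ ^ ((d : ℝ) + p - β))) * r ^ (-β) else 0

/-- The (p-th power of the) nonlocal seminorm `|u|^p_{S_δ^β(U)}`. -/
def Ssem (d : ℕ) (p β δ : ℝ) (U : Set (EuclideanSpace ℝ (Fin d)))
    (u : EuclideanSpace ℝ (Fin d) → ℝ) : ℝ :=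
  ∫ x in U, ∫ y in U, nlKernel d p β δ (dist y x) * |u y - u x| ^ p

/-- The (p-th power of the) nonlocal trace seminorm `|u|^p_{T_δ^β(Ω)}`. -/
def Tsem (d : ℕ) (p β δ : ℝ) (Ω : Set (EuclideanSpace ℝ (Fin d)))
    (u : EuclideanSpace ℝ (Fin d) → ℝ) : ℝ :=
  δ ^ (β - 2) * ∫ x in Ω, ∫ y in Ω,
    |u y - u x| ^ p / ((max (dist y x) δ) ^ ((d : ℝ) + p - 2) * (min (dist y x) δ) ^ β)

/-- The p-th power of the `L^p` norm of `u` over `U`. -/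
def LpPow (d : ℕ) (p : ℝ) (U : Set (EuclideanSpace ℝ (Fin d)))
    (u : EuclideanSpace ℝ (Fin d) → ℝ) : ℝ :=
  ∫ x in U, |u x| ^ p

/-- The stripe `(a,b) × ℝ^{d-1}`. -/
def stripe (d : ℕ) (hd : 0 < d) (a b : ℝ) : Set (EuclideanSpace ℝ (Fin d)) :=
  {x | a < x ⟨0, hd⟩ ∧ x ⟨0, hd⟩ < b}

/-- The half space `(a,∞) × ℝ^{d-1}`. -/
def stripeInf (d : ℕ) (hd : 0 < d) (a : ℝ) : Set (EuclideanSpace ℝ (Fin d)) :=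
  {x | a < x ⟨0, hd⟩}

/-- The point `(t, xb) ∈ ℝ × ℝ^{d-1} = ℝ^d`. -/
def mkPt (n : ℕ) (t : ℝ) (xb : EuclideanSpace ℝ (Fin n)) :
    EuclideanSpace ℝ (Fin (n + 1)) :=
  WithLp.toLp 2 (Fin.cons t (WithLp.ofLp xb) : Fin (n + 1) → ℝ)

/-- The tangential part `xb` of a point `x = (t, xb) ∈ ℝ^d`. -/
def tailPt (n : ℕ) (x : EuclideanSpace ℝ (Fin (n + 1))) : EuclideanSpace ℝ (Fin n) :=
  WithLp.toLp 2 (fun j : Fin n => x j.succ)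

/-- The graph `Φ(ℝ^{d-1}) = {(φ(xb), xb)} ⊂ ℝ^d` of `φ`. -/
def graphSet (n : ℕ) (φ : EuclideanSpace ℝ (Fin n) → ℝ) :
    Set (EuclideanSpace ℝ (Fin (n + 1))) :=
  {z | ∃ xb, z = mkPt n (φ xb) xb}

/-- The admissible offset levels at `xb`:
`{t : dist((t,xb), Φ(ℝ^{d-1})) = δ and t < φ(xb)}`. -/
def offsetLevels (n : ℕ) (φ : EuclideanSpace ℝ (Fin n) → ℝ) (δ : ℝ)
    (xb : EuclideanSpace ℝ (Fin n)) : Set ℝ :=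
  {t | Metric.infDist (mkPt n t xb) (graphSet n φ) = δ ∧ t < φ xb}

/-- The inner `δ`-offset `ψ` of the Lipschitz graph of `φ`, defined as the minimal
admissible offset level. -/
def psiOff (n : ℕ) (φ : EuclideanSpace ℝ (Fin n) → ℝ) (δ : ℝ)
    (xb : EuclideanSpace ℝ (Fin n)) : ℝ :=
  sInf (offsetLevels n φ δ xb)

/-- The fiber-wise collar straightening map sending
`x = (t, xb) ∈ (-δ,0) × ℝ^{d-1}` to `x' = ((1+t/δ)φ(xb) - (t/δ)ψ(xb), xb)`. -/
def collarMap (n : ℕ) (φ ψ : EuclideanSpace ℝ (Fin n) → ℝ) (δ : ℝ)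
    (x : EuclideanSpace ℝ (Fin (n + 1))) : EuclideanSpace ℝ (Fin (n + 1)) :=
  mkPt n ((1 + x 0 / δ) * φ (tailPt n x) - (x 0 / δ) * ψ (tailPt n x)) (tailPt n x)

namespace PsiAux

lemma dist_mkPt (n : ℕ) (t s : ℝ) (xb yb : EuclideanSpace ℝ (Fin n)) :
    dist (mkPt n t xb) (mkPt n s yb) = Real.sqrt ((t - s)^2 + dist xb yb ^ 2) := by
  rw [EuclideanSpace.dist_eq]
  congr 1
  rw [Fin.sum_univ_succ]
  have h0 : dist (mkPt n t xb 0) (mkPt n s yb 0) = dist t s := rfl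
  have hsum : ∀ j : Fin n, dist (mkPt n t xb j.succ) (mkPt n s yb j.succ)
      = dist (xb j) (yb j) := fun _ => rfl
  simp only [h0, hsum, Real.dist_eq, sq_abs]
  congr 1
  rw [EuclideanSpace.dist_eq, Real.sq_sqrt (by positivity)]
  simp [Real.dist_eq, sq_abs]

lemma tail_mkPt (n : ℕ) (t : ℝ) (xb : EuclideanSpace ℝ (Fin n)) :
    tailPt n (mkPt n t xb) = xb := by ext j; rfl

lemma mkPt_eta (n : ℕ) (z : EuclideanSpace ℝ (Fin (n + 1))) :
    mkPt n (z 0) (tailPt n z) = z := by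
  ext i
  refine Fin.cases ?_ (fun j => ?_) i
  · rfl
  · rfl

lemma graphSet_eq (n : ℕ) (φ : EuclideanSpace ℝ (Fin n) → ℝ) :
    graphSet n φ = {z | z 0 - φ (tailPt n z) = 0} := by
  ext z
  constructor
  · rintro ⟨xb, rfl⟩
    have h1 : mkPt n (φ xb) xb 0 = φ xb := rfl
    simp [h1, tail_mkPt]
  · intro hz
    refine ⟨tailPt n z, ?_⟩
    have : φ (tailPt n z) = z 0 := by linarith [hz.out]
    rw [this, mkPt_eta]

lemma tailPt_lipschitz (n : ℕ) : LipschitzWith 1 (tailPt n) := by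
  apply LipschitzWith.of_dist_le_mul
  intro x y
  rw [NNReal.coe_one, one_mul, EuclideanSpace.dist_eq, EuclideanSpace.dist_eq]
  apply Real.sqrt_le_sqrt
  rw [Fin.sum_univ_succ]
  have : ∀ j : Fin n, dist (tailPt n x j) (tailPt n y j) = dist (x j.succ) (y j.succ) :=
    fun _ => rfl
  simp only [this]
  have hnn : (0:ℝ) ≤ dist (x 0) (y 0) ^ 2 := sq_nonneg _
  linarith

lemma graph_closed (n : ℕ) {L : NNReal} {φ : EuclideanSpace ℝ (Fin n) → ℝ}
    (hφ : LipschitzWith L φ) : IsClosed (graphSet n φ) := by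
  rw [graphSet_eq]
  have hc : Continuous fun z : EuclideanSpace ℝ (Fin (n+1)) => z 0 - φ (tailPt n z) :=
    ((EuclideanSpace.proj (0 : Fin (n+1))).continuous).sub
      (hφ.continuous.comp (tailPt_lipschitz n).continuous)
  exact isClosed_eq hc continuous_const

lemma graph_nonempty (n : ℕ) (φ : EuclideanSpace ℝ (Fin n) → ℝ) :
    (graphSet n φ).Nonempty := ⟨mkPt n (φ 0) 0, 0, rfl⟩

lemma cont_f (n : ℕ) (φ : EuclideanSpace ℝ (Fin n) → ℝ) (xb : EuclideanSpace ℝ (Fin n)) :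
    Continuous fun t => Metric.infDist (mkPt n t xb) (graphSet n φ) := by
  refine (Metric.continuous_infDist_pt _).comp (Isometry.continuous ?_)
  apply Isometry.of_dist_eq
  intro t s
  rw [dist_mkPt, dist_self]
  simp [Real.dist_eq, Real.sqrt_sq_eq_abs]

/-- Below the graph (for nonpositive levels), the distance to the graph is at least `-t`. -/
lemma lb_f (n : ℕ) {φ : EuclideanSpace ℝ (Fin n) → ℝ} (hφ0 : ∀ xb, 0 ≤ φ xb)
    (t : ℝ) (ht : t ≤ 0) (xb : EuclideanSpace ℝ (Fin n)) :
    -t ≤ Metric.infDist (mkPt n t xb) (graphSet n φ) := by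
  by_contra hlt
  push_neg at hlt
  obtain ⟨y, ⟨zb, rfl⟩, hy⟩ := (Metric.infDist_lt_iff (graph_nonempty n φ)).1 hlt
  rw [dist_mkPt] at hy
  have h1 : -t ≤ |t - φ zb| := by
    rw [abs_sub_comm, abs_of_nonneg (by linarith [hφ0 zb])]
    linarith [hφ0 zb]
  have h2 : |t - φ zb| ≤ Real.sqrt ((t - φ zb)^2 + dist xb zb ^ 2) := by
    rw [← Real.sqrt_sq_eq_abs]
    exact Real.sqrt_le_sqrt (by nlinarith [sq_nonneg (dist xb zb)])
  linarith


lemma offset_nonempty (n : ℕ) {δ : ℝ} (hδ : 0 < δ) {L : NNReal}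
    {φ : EuclideanSpace ℝ (Fin n) → ℝ} (hφ0 : ∀ xb, 0 ≤ φ xb) (hφ : LipschitzWith L φ)
    (xb : EuclideanSpace ℝ (Fin n)) :
    (offsetLevels n φ δ xb).Nonempty := by
  set f := fun t => Metric.infDist (mkPt n t xb) (graphSet n φ) with hf
  have hfc : Continuous f := cont_f n φ xb
  have hftop : f (φ xb) = 0 := Metric.infDist_zero_of_mem ⟨xb, rfl⟩
  set t₀ : ℝ := -δ - 1 with ht₀
  have ht₀le : t₀ ≤ φ xb := by have := hφ0 xb; simp only [ht₀]; linarith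
  have hft₀ : δ < f t₀ := by
    have := lb_f n hφ0 t₀ (by simp only [ht₀]; linarith) xb
    simp only [hf, ht₀] at this ⊢
    linarith
  have hmem : δ ∈ Icc (f (φ xb)) (f t₀) := by
    rw [hftop]; exact ⟨le_of_lt hδ, le_of_lt hft₀⟩
  obtain ⟨t, ht, hft⟩ := intermediate_value_Icc' ht₀le hfc.continuousOn hmem
  refine ⟨t, hft, lt_of_le_of_ne ht.2 ?_⟩
  intro h
  rw [h, hftop] at hft
  exact absurd hft.symm (ne_of_gt hδ)

lemma offset_bddBelow (n : ℕ) {δ : ℝ} (hδ : 0 < δ) {φ : EuclideanSpace ℝ (Fin n) → ℝ}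
    (hφ0 : ∀ xb, 0 ≤ φ xb) (xb : EuclideanSpace ℝ (Fin n)) :
    BddBelow (offsetLevels n φ δ xb) := by
  refine ⟨-δ, fun t ht => ?_⟩
  rcases le_or_gt t 0 with h | h
  · have := lb_f n hφ0 t h xb
    rw [ht.1] at this
    linarith
  · linarith

lemma offset_closed (n : ℕ) {δ : ℝ} (hδ : 0 < δ) {φ : EuclideanSpace ℝ (Fin n) → ℝ}
    (xb : EuclideanSpace ℝ (Fin n)) :
    IsClosed (offsetLevels n φ δ xb) := by
  have hftop : Metric.infDist (mkPt n (φ xb) xb) (graphSet n φ) = 0 :=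
    Metric.infDist_zero_of_mem ⟨xb, rfl⟩
  have : offsetLevels n φ δ xb
      = (fun t => Metric.infDist (mkPt n t xb) (graphSet n φ)) ⁻¹' {δ} ∩ Iic (φ xb) := by
    ext t
    constructor
    · exact fun ht => ⟨ht.1, le_of_lt ht.2⟩
    · rintro ⟨h1, h2⟩
      have h1' : Metric.infDist (mkPt n t xb) (graphSet n φ) = δ := h1
      refine ⟨h1', lt_of_le_of_ne h2 ?_⟩
      intro h
      rw [h, hftop] at h1'
      exact absurd h1'.symm (ne_of_gt hδ)
  rw [this]
  exact ((isClosed_singleton.preimage (cont_f n φ xb))).inter isClosed_Iic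

lemma psi_isLeast (n : ℕ) {δ : ℝ} (hδ : 0 < δ) {L : NNReal}
    {φ : EuclideanSpace ℝ (Fin n) → ℝ} (hφ0 : ∀ xb, 0 ≤ φ xb) (hφ : LipschitzWith L φ)
    (xb : EuclideanSpace ℝ (Fin n)) :
    IsLeast (offsetLevels n φ δ xb) (psiOff n φ δ xb) :=
  ⟨(offset_closed n hδ xb).csInf_mem (offset_nonempty n hδ hφ0 hφ xb)
      (offset_bddBelow n hδ hφ0 xb),
    fun _ ht => csInf_le (offset_bddBelow n hδ hφ0 xb) ht⟩

lemma gt_delta (n : ℕ) {δ : ℝ} (hδ : 0 < δ) {L : NNReal}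
    {φ : EuclideanSpace ℝ (Fin n) → ℝ} (hφ0 : ∀ xb, 0 ≤ φ xb) (hφ : LipschitzWith L φ)
    (xb : EuclideanSpace ℝ (Fin n)) {t : ℝ} (ht : t < psiOff n φ δ xb) :
    δ < Metric.infDist (mkPt n t xb) (graphSet n φ) := by
  set f := fun s => Metric.infDist (mkPt n s xb) (graphSet n φ) with hf
  have hL := psi_isLeast n hδ hφ0 hφ xb
  have haφ : psiOff n φ δ xb < φ xb := hL.1.2
  by_contra hle
  push_neg at hle
  set t₀ : ℝ := min t (-δ) - 1 with ht₀
  have ht₀t : t₀ ≤ t := by simp only [ht₀]; have := min_le_left t (-δ); linarith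
  have hft₀ : δ < f t₀ := by
    have h1 := lb_f n hφ0 t₀ (by simp only [ht₀]; have := min_le_right t (-δ); linarith) xb
    have h2 : δ + 1 ≤ -t₀ := by simp only [ht₀]; have := min_le_right t (-δ); linarith
    simp only [hf]
    linarith
  have hmem : δ ∈ Icc (f t) (f t₀) := ⟨hle, le_of_lt hft₀⟩
  obtain ⟨u, hu, hfu⟩ := intermediate_value_Icc' ht₀t (cont_f n φ xb).continuousOn hmem
  have humem : u ∈ offsetLevels n φ δ xb := ⟨hfu, lt_of_le_of_lt hu.2 (lt_trans ht haφ)⟩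
  have := hL.2 humem
  linarith [hu.2]

set_option maxHeartbeats 1000000 in
lemma psi_le (n : ℕ) {δ : ℝ} (hδ : 0 < δ) {L : NNReal}
    {φ : EuclideanSpace ℝ (Fin n) → ℝ} (hφ0 : ∀ xb, 0 ≤ φ xb) (hφ : LipschitzWith L φ)
    (xb yb : EuclideanSpace ℝ (Fin n)) :
    psiOff n φ δ yb ≤ psiOff n φ δ xb + L * dist xb yb := by
  set a := psiOff n φ δ xb with ha
  have hLx := psi_isLeast n hδ hφ0 hφ xb
  have hLy := psi_isLeast n hδ hφ0 hφ yb
  have hfa : Metric.infDist (mkPt n a xb) (graphSet n φ) = δ := hLx.1.1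
  have haφ : a < φ xb := hLx.1.2
  obtain ⟨z, hzG, hz⟩ := (graph_closed n hφ).exists_infDist_eq_dist
    (graph_nonempty n φ) (mkPt n a xb)
  obtain ⟨zb, rfl⟩ := hzG
  set v : ℝ := φ zb - a with hv
  set r : ℝ := dist xb zb with hrdef
  have hr0 : (0:ℝ) ≤ r := dist_nonneg
  have hδeq : δ = Real.sqrt ((a - φ zb)^2 + r^2) := by
    rw [← hfa, hz, dist_mkPt]
  have hδ2 : δ^2 = v^2 + r^2 := by
    rw [hδeq, Real.sq_sqrt (by positivity)]
    simp only [hv]; ring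
  -- the nearest point lies above the level a
  have hv0 : (0:ℝ) ≤ v := by
    by_contra hvneg
    push_neg at hvneg
    have hzb_lt : φ zb < a := by simp only [hv] at hvneg; linarith
    set t : ℝ := (φ zb + a)/2 with htdef
    have h1 : t < a := by simp only [htdef]; linarith
    have h2 := gt_delta n hδ hφ0 hφ xb (ha ▸ h1)
    have h3 : Metric.infDist (mkPt n t xb) (graphSet n φ)
        ≤ dist (mkPt n t xb) (mkPt n (φ zb) zb) :=
      Metric.infDist_le_dist_of_mem ⟨zb, rfl⟩
    rw [dist_mkPt] at h3
    have h4 : Real.sqrt ((t - φ zb)^2 + dist xb zb^2)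
        < Real.sqrt ((a - φ zb)^2 + dist xb zb^2) := by
      apply Real.sqrt_lt_sqrt (by positivity)
      have ht1 : 0 < t - φ zb := by simp only [htdef]; linarith
      have ht2 : t - φ zb < a - φ zb := by simp only [htdef]; linarith
      nlinarith
    rw [← hrdef, ← hδeq] at h4
    linarith
  -- the cone condition: r ≤ L * v
  have hrLv : r ≤ (L:ℝ) * v := by
    rcases eq_or_lt_of_le hr0 with hr | hr
    · rw [← hr]
      exact mul_nonneg L.coe_nonneg hv0
    · apply le_of_forall_pos_le_add
      intro ε hε
      set s : ℝ := min 1 (2*ε/(((L:ℝ)^2+1)*r)) with hsdef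
      have hs0 : 0 < s := lt_min one_pos (by positivity)
      have hs1 : s ≤ 1 := min_le_left _ _
      set wb := zb + s • (xb - zb) with hwb
      have hdwz : dist wb zb = s * r := by
        rw [dist_eq_norm]
        have hsub : wb - zb = s • (xb - zb) := by rw [hwb]; module
        rw [hsub, norm_smul, Real.norm_eq_abs, abs_of_pos hs0, ← dist_eq_norm]
      have hdxw : dist xb wb = (1 - s) * r := by
        rw [dist_comm, dist_eq_norm]
        have hsub : wb - xb = (1 - s) • (zb - xb) := by
          rw [hwb]; module
        rw [hsub, norm_smul, Real.norm_eq_abs, abs_of_nonneg (by linarith), ← dist_eq_norm]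
        rw [dist_comm]
      have hφw : |φ wb - φ zb| ≤ (L:ℝ) * (s * r) := by
        have h5 := hφ.dist_le_mul wb zb
        rw [hdwz, Real.dist_eq] at h5
        exact h5
      have habs : |φ wb - a| ≤ v + s * ((L:ℝ) * r) := by
        rw [abs_le] at hφw ⊢
        constructor
        · nlinarith [hφw.1]
        · nlinarith [hφw.2]
      have hkey : δ ≤ Real.sqrt ((a - φ wb)^2 + ((1-s)*r)^2) := by
        have h3 : Metric.infDist (mkPt n a xb) (graphSet n φ)
            ≤ dist (mkPt n a xb) (mkPt n (φ wb) wb) :=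
          Metric.infDist_le_dist_of_mem ⟨wb, rfl⟩
        rw [hfa, dist_mkPt, hdxw] at h3
        exact h3
      have hsq : δ^2 ≤ (a - φ wb)^2 + ((1-s)*r)^2 := by
        have h8 : δ^2 ≤ Real.sqrt ((a - φ wb)^2 + ((1-s)*r)^2) ^ 2 :=
          pow_le_pow_left₀ hδ.le hkey 2
        rwa [Real.sq_sqrt (by positivity)] at h8
      have h6 : (a - φ wb)^2 ≤ (v + s*((L:ℝ)*r))^2 := by
        have h7 := abs_le.1 habs
        nlinarith [h7.1, h7.2]
      have hcomb : v^2 + r^2 ≤ (v + s*((L:ℝ)*r))^2 + (1-s)^2*r^2 := by nlinarith [hsq, h6, hδ2]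
      have e1 : 2*(s*r*r) ≤ 2*(s*r*((L:ℝ)*v)) + s*(s*(((L:ℝ)^2+1)*r))*r := by nlinarith [hcomb]
      have hs2 : s * (((L:ℝ)^2+1)*r) ≤ 2*ε := by
        calc s * (((L:ℝ)^2+1)*r) ≤ (2*ε/(((L:ℝ)^2+1)*r)) * (((L:ℝ)^2+1)*r) := by
              apply mul_le_mul_of_nonneg_right (min_le_right _ _) (by positivity)
          _ = 2*ε := by field_simp
      have e2 : s*(s*(((L:ℝ)^2+1)*r))*r ≤ 2*(s*r*ε) := by
        have h9 := mul_le_mul_of_nonneg_left hs2 (show (0:ℝ) ≤ s*r by positivity)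
        nlinarith [h9]
      have e3 : (s*r)*r ≤ (s*r)*((L:ℝ)*v + ε) := by nlinarith [e1, e2]
      exact le_of_mul_le_mul_left e3 (mul_pos hs0 hr)
  -- the transported graph point
  set hh : ℝ := dist xb yb with hhdef
  set wb' := zb + (yb - xb) with hwb'
  have hd1 : dist wb' yb = r := by
    rw [dist_eq_norm]
    have hsub : wb' - yb = zb - xb := by rw [hwb']; module
    rw [hsub, ← dist_eq_norm, dist_comm]
  have hd2 : dist wb' zb = hh := by
    rw [dist_eq_norm]
    have hsub : wb' - zb = yb - xb := by rw [hwb']; module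
    rw [hsub, ← dist_eq_norm, dist_comm]
  have hφw' : φ wb' ≤ φ zb + (L:ℝ) * hh := by
    have h5 := hφ.dist_le_mul wb' zb
    rw [hd2, Real.dist_eq] at h5
    have := (abs_le.1 h5).2
    linarith
  set s' : ℝ := φ wb' - v with hs'def
  have hfy : Metric.infDist (mkPt n s' yb) (graphSet n φ) ≤ δ := by
    have h3 : Metric.infDist (mkPt n s' yb) (graphSet n φ)
        ≤ dist (mkPt n s' yb) (mkPt n (φ wb') wb') :=
      Metric.infDist_le_dist_of_mem ⟨wb', rfl⟩
    rw [dist_mkPt] at h3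
    have heq : (s' - φ wb')^2 + dist yb wb'^2 = (a - φ zb)^2 + r^2 := by
      rw [dist_comm, hd1]
      simp only [hs'def, hv]
      ring
    rw [heq, ← hδeq] at h3
    exact h3
  have hs'le : s' ≤ a + (L:ℝ) * hh := by
    simp only [hs'def, hv] at hφw' ⊢
    linarith
  rcases le_or_gt (φ yb) (a + (L:ℝ) * hh) with hc | hc
  · exact le_trans (le_of_lt hLy.1.2) hc
  · set t₀ : ℝ := min s' (-δ) - 1 with ht₀def
    have ht₀s : t₀ ≤ s' := by simp only [ht₀def]; have := min_le_left s' (-δ); linarith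
    have hft₀ : δ ≤ Metric.infDist (mkPt n t₀ yb) (graphSet n φ) := by
      have h1 := lb_f n hφ0 t₀ (by simp only [ht₀def]; have := min_le_right s' (-δ); linarith) yb
      have h2 : δ + 1 ≤ -t₀ := by simp only [ht₀def]; have := min_le_right s' (-δ); linarith
      linarith
    obtain ⟨u, hu, hfu⟩ := intermediate_value_Icc' ht₀s (cont_f n φ yb).continuousOn
      ⟨hfy, hft₀⟩
    have humem : u ∈ offsetLevels n φ δ yb := ⟨hfu, by linarith [hu.2, hs'le]⟩
    exact le_trans (hLy.2 humem) (le_trans hu.2 hs'le)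

end PsiAux

/-- the inner `δ`-offset of a Lipschitz graph is well defined and
Lipschitz with the same constant, independent of `δ`. -/
theorem psiOff_isLeast_and_lipschitz (n : ℕ) (hn : 1 ≤ n) (δ : ℝ) (hδ : 0 < δ)
    (L : NNReal) (φ : EuclideanSpace ℝ (Fin n) → ℝ)
    (hφ0 : ∀ xb, 0 ≤ φ xb) (hφ : LipschitzWith L φ) :
    (∀ xb, IsLeast (offsetLevels n φ δ xb) (psiOff n φ δ xb))
    ∧ LipschitzWith L (psiOff n φ δ) := by
  refine ⟨fun xb => PsiAux.psi_isLeast n hδ hφ0 hφ xb, ?_⟩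
  apply LipschitzWith.of_dist_le_mul
  intro x y
  have hd := dist_comm x y
  have h1 := PsiAux.psi_le n hδ hφ0 hφ y x
  have h2 := PsiAux.psi_le n hδ hφ0 hφ x y
  rw [Real.dist_eq, abs_sub_le_iff]
  constructor
  · rw [hd]
    linarith
  · linarith
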